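/- Fix an integer m ≥ 1, ε̄ > 0 and C_P > 0. Let (A_n)_{n∈ℤ} be m×m matrices with A_n(i,j) ≥ ε̄ for all i,j and ‖A_n‖ ≤ (m ε̄)^{−1} for all n, and suppose the potential is bounded: |𝒰_n| ≤ C_P for all n ∈ ℤ, where 𝒰_n = log‖A_n ⋯ A_1‖ for n ≥ 1, 𝒰_0 = 0, and 𝒰_n = −log‖A_0 ⋯ A_{n+1}‖ for n ≤ −1. Then there is a constant C̃_P such that for all integers n > k and every nonzero nonnegative vector x ∈ ℝ^m: e^{−C̃_P} ‖x‖ ≤ (A_n A_{n−1} ⋯ A_{k+1} x)(i) ≤ e^{C̃_P} ‖x‖ for every coordinate i ∈ {1,…,m}. -/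

import Mathlib

/-- `prodApply A a k v = A_{a+k} ⋯ A_{a+1} v`. -/
def prodApply {m : ℕ} (A : ℤ → Matrix (Fin m) (Fin m) ℝ) (a : ℤ) :
    ℕ → (Fin m → ℝ) → (Fin m → ℝ)
  | 0, v => v
  | k + 1, v => (A (a + k + 1)).mulVec (prodApply A a k v)

/-- `prodMat A a k = A_{a+k} ⋯ A_{a+1}` (the empty product is the identity). -/
def prodMat {m : ℕ} (A : ℤ → Matrix (Fin m) (Fin m) ℝ) (a : ℤ) :
    ℕ → Matrix (Fin m) (Fin m) ℝ
  | 0 => 1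
  | k + 1 => A (a + k + 1) * prodMat A a k

/-- The matrix norm `‖A‖ = max_i ∑_j |A(i,j)|` (realized via the sup norm on `Fin m → ℝ`). -/
noncomputable def matNorm {m : ℕ} (A : Matrix (Fin m) (Fin m) ℝ) : ℝ :=
  ‖fun i => ∑ j, |A i j|‖

/-- The potential `𝒰_n`: `log ‖A_n ⋯ A_1‖` for `n ≥ 1`, `0` for `n = 0`,
and `−log ‖A_0 ⋯ A_{n+1}‖` for `n ≤ −1`. -/
noncomputable def potential {m : ℕ} (A : ℤ → Matrix (Fin m) (Fin m) ℝ) (n : ℤ) : ℝ :=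
  if 1 ≤ n then Real.log (matNorm (prodMat A 0 n.toNat))
  else if n = 0 then 0
  else -Real.log (matNorm (prodMat A n (-n).toNat))

section aux
variable {m : ℕ} {εbar γ c : ℝ} {A : ℤ → Matrix (Fin m) (Fin m) ℝ}

lemma rowSum_mul (B C : Matrix (Fin m) (Fin m) ℝ) (i : Fin m) :
    ∑ j, (B * C) i j = ∑ l, B i l * ∑ j, C l j := by
  simp only [Matrix.mul_apply, Finset.mul_sum]
  exact Finset.sum_comm

lemma rowSum_le_matNorm (P : Matrix (Fin m) (Fin m) ℝ)
    (hP : ∀ i j, 0 ≤ P i j) (i : Fin m) : ∑ j, P i j ≤ matNorm P := by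
  have h := norm_le_pi_norm (fun i => ∑ j, |P i j|) i
  rw [Real.norm_eq_abs, abs_of_nonneg (Finset.sum_nonneg fun j _ => abs_nonneg _)] at h
  calc ∑ j, P i j = ∑ j, |P i j| :=
        Finset.sum_congr rfl fun j _ => (abs_of_nonneg (hP i j)).symm
    _ ≤ matNorm P := h

lemma matNorm_le_of (P : Matrix (Fin m) (Fin m) ℝ) (hP : ∀ i j, 0 ≤ P i j)
    {M : ℝ} (hM : 0 ≤ M) (h : ∀ i, ∑ j, P i j ≤ M) : matNorm P ≤ M := by
  rw [matNorm]
  refine (pi_norm_le_iff_of_nonneg hM).2 fun i => ?_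
  rw [Real.norm_eq_abs, abs_of_nonneg (Finset.sum_nonneg fun j _ => abs_nonneg _)]
  calc ∑ j, |P i j| = ∑ j, P i j := Finset.sum_congr rfl fun j _ => abs_of_nonneg (hP i j)
    _ ≤ M := h i

lemma prodMat_succ (a : ℤ) (t : ℕ) :
    prodMat A a (t + 1) = A (a + t + 1) * prodMat A a t := rfl

lemma prodMat_nonneg (hpos : ∀ n i j, (0:ℝ) ≤ A n i j) (a : ℤ) :
    ∀ ℓ, ∀ i j, 0 ≤ prodMat A a ℓ i j := by
  intro ℓ
  induction ℓ with
  | zero =>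
    intro i j
    by_cases h : i = j <;> simp [prodMat, Matrix.one_apply, h]
  | succ t ih =>
    intro i j
    rw [prodMat_succ, Matrix.mul_apply]
    exact Finset.sum_nonneg fun l _ => mul_nonneg (hpos _ _ _) (ih _ _)

lemma prodMat_split (a : ℤ) (p : ℕ) :
    ∀ q, prodMat A a (p + q) = prodMat A (a + p) q * prodMat A a p := by
  intro q
  induction q with
  | zero => simp [prodMat]
  | succ t ih =>
    have h1 : p + (t + 1) = (p + t) + 1 := by omega
    rw [h1, prodMat_succ, ih, prodMat_succ, mul_assoc]
    congr 2
    push_cast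
    ring_nf

lemma prodApply_eq (a : ℤ) :
    ∀ ℓ (x : Fin m → ℝ), prodApply A a ℓ x = (prodMat A a ℓ).mulVec x := by
  intro ℓ
  induction ℓ with
  | zero => intro x; simp [prodApply, prodMat, Matrix.one_mulVec]
  | succ t ih =>
    intro x
    show (A (a + t + 1)).mulVec (prodApply A a t x) = _
    rw [ih, Matrix.mulVec_mulVec, prodMat_succ]

lemma entry_pos (hm : 1 ≤ m) (hε : 0 < εbar) (hpos : ∀ n i j, εbar ≤ A n i j) (a : ℤ) :
    ∀ t, ∀ i j, 0 < prodMat A a (t + 1) i j := by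
  haveI : Nonempty (Fin m) := ⟨⟨0, hm⟩⟩
  intro t
  induction t with
  | zero =>
    intro i j
    have h : prodMat A a 1 = A (a + (0:ℕ) + 1) * 1 := prodMat_succ a 0
    rw [h, mul_one]
    exact lt_of_lt_of_le hε (hpos _ _ _)
  | succ t ih =>
    intro i j
    rw [prodMat_succ, Matrix.mul_apply]
    exact Finset.sum_pos (fun l _ => mul_pos (lt_of_lt_of_le hε (hpos _ _ _)) (ih l j))
      Finset.univ_nonempty

lemma matNorm_prodMat_pos (hm : 1 ≤ m) (hε : 0 < εbar) (hpos : ∀ n i j, εbar ≤ A n i j)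
    (a : ℤ) {ℓ : ℕ} (hℓ : 1 ≤ ℓ) : 0 < matNorm (prodMat A a ℓ) := by
  obtain ⟨t, rfl⟩ : ∃ t, ℓ = t + 1 := ⟨ℓ - 1, by omega⟩
  have hP : ∀ i j, 0 ≤ prodMat A a (t+1) i j :=
    prodMat_nonneg (fun n i j => le_trans hε.le (hpos n i j)) a (t+1)
  set i0 : Fin m := ⟨0, hm⟩
  calc (0:ℝ) < prodMat A a (t+1) i0 i0 := entry_pos hm hε hpos a t i0 i0
    _ ≤ ∑ j, prodMat A a (t+1) i0 j :=
        Finset.single_le_sum (fun j _ => hP i0 j) (Finset.mem_univ i0)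
    _ ≤ matNorm _ := rowSum_le_matNorm _ hP i0

lemma entry_ge (hε : 0 < εbar) (hγ : 0 < γ) (hγc : γ * c = εbar)
    (hpos : ∀ n i j, εbar ≤ A n i j) (hrow : ∀ n i, ∑ j, A n i j ≤ c) (a : ℤ) :
    ∀ t, ∀ i j, γ * (∑ j', prodMat A a (t + 1) i j') ≤ prodMat A a (t + 1) i j := by
  intro t
  induction t with
  | zero =>
    intro i j
    have h1 : prodMat A a 1 = A (a + (0:ℕ) + 1) * 1 := prodMat_succ a 0
    rw [h1, mul_one]
    calc γ * ∑ j', A (a + (0:ℕ) + 1) i j' ≤ γ * c :=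
          mul_le_mul_of_nonneg_left (hrow _ i) hγ.le
      _ = εbar := hγc
      _ ≤ A (a + (0:ℕ) + 1) i j := hpos _ i j
  | succ t ih =>
    intro i j
    rw [prodMat_succ, Matrix.mul_apply, rowSum_mul, Finset.mul_sum]
    apply Finset.sum_le_sum
    intro l _
    have hA : 0 ≤ A (a + (t+1:ℕ) + 1) i l := le_trans hε.le (hpos _ _ _)
    calc γ * (A (a + (t+1:ℕ) + 1) i l * ∑ j', prodMat A a (t+1) l j')
        = A (a + (t+1:ℕ) + 1) i l * (γ * ∑ j', prodMat A a (t+1) l j') := by ring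
      _ ≤ A (a + (t+1:ℕ) + 1) i l * prodMat A a (t+1) l j :=
          mul_le_mul_of_nonneg_left (ih l j) hA

lemma rows_comp (hε : 0 < εbar) (hγ : 0 < γ) (hγc : γ * c = εbar)
    (hpos : ∀ n i j, εbar ≤ A n i j) (hrow : ∀ n i, ∑ j, A n i j ≤ c) (a : ℤ) (t : ℕ)
    (i i' : Fin m) :
    γ * (∑ j, prodMat A a (t + 1) i' j) ≤ ∑ j, prodMat A a (t + 1) i j := by
  have hQ : ∀ l j, 0 ≤ prodMat A a t l j :=
    prodMat_nonneg (fun n i j => le_trans hε.le (hpos n i j)) a t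
  set b : ℤ := a + t + 1
  have hrQ : ∀ l, 0 ≤ ∑ j, prodMat A a t l j := fun l => Finset.sum_nonneg fun j _ => hQ l j
  set T : ℝ := ∑ l, ∑ j, prodMat A a t l j with hT
  have hT0 : 0 ≤ T := Finset.sum_nonneg fun l _ => hrQ l
  rw [prodMat_succ, rowSum_mul, rowSum_mul]
  have h_up : ∑ l, A b i' l * ∑ j, prodMat A a t l j ≤ c * T := by
    calc ∑ l, A b i' l * ∑ j, prodMat A a t l j ≤ ∑ l, A b i' l * T := by
          refine Finset.sum_le_sum fun l _ => ?_
          exact mul_le_mul_of_nonneg_left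
            (Finset.single_le_sum (fun l' _ => hrQ l') (Finset.mem_univ l))
            (le_trans hε.le (hpos _ _ _))
      _ = (∑ l, A b i' l) * T := (Finset.sum_mul _ _ _).symm
      _ ≤ c * T := mul_le_mul_of_nonneg_right (hrow b i') hT0
  have h_lo : εbar * T ≤ ∑ l, A b i l * ∑ j, prodMat A a t l j := by
    rw [hT, Finset.mul_sum]
    exact Finset.sum_le_sum fun l _ => mul_le_mul_of_nonneg_right (hpos b i l) (hrQ l)
  calc γ * ∑ l, A b i' l * ∑ j, prodMat A a t l j ≤ γ * (c * T) :=
        mul_le_mul_of_nonneg_left h_up hγ.le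
    _ = εbar * T := by rw [← mul_assoc, hγc]
    _ ≤ _ := h_lo

lemma matNorm_mul_le (B C : Matrix (Fin m) (Fin m) ℝ)
    (hB : ∀ i j, 0 ≤ B i j) (hC : ∀ i j, 0 ≤ C i j) :
    matNorm (B * C) ≤ matNorm B * matNorm C := by
  have hBC : ∀ i j, 0 ≤ (B * C) i j := fun i j => by
    rw [Matrix.mul_apply]
    exact Finset.sum_nonneg fun l _ => mul_nonneg (hB _ _) (hC _ _)
  refine matNorm_le_of _ hBC (mul_nonneg (norm_nonneg _) (norm_nonneg _)) fun i => ?_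
  rw [rowSum_mul]
  calc ∑ l, B i l * ∑ j, C l j ≤ ∑ l, B i l * matNorm C :=
        Finset.sum_le_sum fun l _ =>
          mul_le_mul_of_nonneg_left (rowSum_le_matNorm C hC l) (hB i l)
    _ = (∑ l, B i l) * matNorm C := (Finset.sum_mul _ _ _).symm
    _ ≤ matNorm B * matNorm C :=
        mul_le_mul_of_nonneg_right (rowSum_le_matNorm B hB i) (norm_nonneg _)

lemma matNorm_mul_ge (hm : 1 ≤ m) (hγ : 0 < γ) (B C : Matrix (Fin m) (Fin m) ℝ)
    (hB : ∀ i j, 0 ≤ B i j) (hC : ∀ i j, 0 ≤ C i j)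
    (hcomp : ∀ l l', γ * (∑ j, C l' j) ≤ ∑ j, C l j) :
    γ * (matNorm B * matNorm C) ≤ matNorm (B * C) := by
  haveI : Nonempty (Fin m) := ⟨⟨0, hm⟩⟩
  have hBC : ∀ i j, 0 ≤ (B * C) i j := fun i j => by
    rw [Matrix.mul_apply]
    exact Finset.sum_nonneg fun l _ => mul_nonneg (hB _ _) (hC _ _)
  have hCl : ∀ l, γ * matNorm C ≤ ∑ j, C l j := by
    intro l
    have h1 : matNorm C ≤ (∑ j, C l j) / γ := by
      refine matNorm_le_of _ hC (div_nonneg (Finset.sum_nonneg fun j _ => hC l j) hγ.le)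
        fun l' => ?_
      rw [le_div_iff₀ hγ]
      calc (∑ j, C l' j) * γ = γ * ∑ j, C l' j := mul_comm _ _
        _ ≤ ∑ j, C l j := hcomp l l'
    calc γ * matNorm C ≤ γ * ((∑ j, C l j) / γ) := mul_le_mul_of_nonneg_left h1 hγ.le
      _ = ∑ j, C l j := by field_simp
  obtain ⟨imax, _, hmax⟩ := Finset.univ.exists_max_image (fun i => ∑ j, B i j)
    Finset.univ_nonempty
  have hBmax : matNorm B ≤ ∑ j, B imax j :=
    matNorm_le_of _ hB (Finset.sum_nonneg fun j _ => hB imax j)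
      (fun i => hmax i (Finset.mem_univ i))
  have hγC0 : 0 ≤ γ * matNorm C := mul_nonneg hγ.le (norm_nonneg _)
  calc γ * (matNorm B * matNorm C) = (γ * matNorm C) * matNorm B := by ring
    _ ≤ (γ * matNorm C) * (∑ l, B imax l) := mul_le_mul_of_nonneg_left hBmax hγC0
    _ = ∑ l, B imax l * (γ * matNorm C) := by
        rw [Finset.mul_sum]; exact Finset.sum_congr rfl fun l _ => mul_comm _ _
    _ ≤ ∑ l, B imax l * ∑ j, C l j :=
        Finset.sum_le_sum fun l _ => mul_le_mul_of_nonneg_left (hCl l) (hB imax l)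
    _ = ∑ j, (B * C) imax j := (rowSum_mul B C imax).symm
    _ ≤ matNorm (B * C) := rowSum_le_matNorm _ hBC imax

lemma matNorm_eq_exp_pos (hm : 1 ≤ m) (hε : 0 < εbar) (hpos : ∀ n i j, εbar ≤ A n i j)
    {n : ℤ} (hn : 1 ≤ n) :
    matNorm (prodMat A 0 n.toNat) = Real.exp (potential A n) := by
  have h : 0 < matNorm (prodMat A 0 n.toNat) :=
    matNorm_prodMat_pos hm hε hpos 0 (by omega)
  rw [potential, if_pos hn, Real.exp_log h]

lemma matNorm_eq_exp_neg (hm : 1 ≤ m) (hε : 0 < εbar) (hpos : ∀ n i j, εbar ≤ A n i j)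
    {n : ℤ} (hn : n ≤ -1) :
    matNorm (prodMat A n (-n).toNat) = Real.exp (-potential A n) := by
  have h : 0 < matNorm (prodMat A n (-n).toNat) :=
    matNorm_prodMat_pos hm hε hpos n (by omega)
  rw [potential, if_neg (by omega), if_neg (by omega), neg_neg, Real.exp_log h]

lemma sandwich_main {γ CP NP p q : ℝ} (hγ : 0 < γ) (hγ1 : γ ≤ 1)
    (hqp1 : -(2*CP) ≤ q - p) (hqp2 : q - p ≤ 2*CP)
    (hub : Real.exp q ≤ NP * Real.exp p)
    (hlb : γ * (NP * Real.exp p) ≤ Real.exp q) :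
    γ * Real.exp (-(2*CP)) ≤ NP ∧ NP ≤ Real.exp (2*CP) / γ := by
  have hep := Real.exp_pos p
  have low : Real.exp (-(2*CP)) ≤ NP := by
    have h : Real.exp (-(2*CP)) * Real.exp p ≤ NP * Real.exp p := by
      rw [← Real.exp_add]
      exact le_trans (Real.exp_le_exp.2 (by linarith)) hub
    exact le_of_mul_le_mul_right h hep
  constructor
  · nlinarith [Real.exp_pos (-(2*CP))]
  · have h : (γ * NP) * Real.exp p ≤ Real.exp (2*CP) * Real.exp p := by
      rw [← Real.exp_add]
      calc (γ * NP) * Real.exp p = γ * (NP * Real.exp p) := by ring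
        _ ≤ Real.exp q := hlb
        _ ≤ Real.exp (2*CP + p) := Real.exp_le_exp.2 (by linarith)
    have h2 : γ * NP ≤ Real.exp (2*CP) := le_of_mul_le_mul_right h hep
    rw [le_div_iff₀ hγ]
    linarith [mul_comm NP γ]

lemma matNorm_prodMat_bounds (hm : 1 ≤ m) (hε : 0 < εbar) (hγ : 0 < γ) (hγ1 : γ ≤ 1)
    (hγc : γ * c = εbar) (hpos : ∀ n i j, εbar ≤ A n i j)
    (hrow : ∀ n i, ∑ j, A n i j ≤ c)
    {C_P : ℝ} (hCP : 0 < C_P) (hpot : ∀ n, |potential A n| ≤ C_P)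
    (a : ℤ) {ℓ : ℕ} (hℓ : 1 ≤ ℓ) :
    γ * Real.exp (-(2*C_P)) ≤ matNorm (prodMat A a ℓ) ∧
      matNorm (prodMat A a ℓ) ≤ Real.exp (2*C_P) / γ := by
  have hpos0 : ∀ (n : ℤ) (i j : Fin m), (0:ℝ) ≤ A n i j :=
    fun n i j => le_trans hε.le (hpos n i j)
  have hnn : ∀ (b : ℤ) (s : ℕ) (i j : Fin m), 0 ≤ prodMat A b s i j :=
    fun b s => prodMat_nonneg hpos0 b s
  have hcomp' : ∀ (b : ℤ) (s : ℕ), 1 ≤ s →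
      ∀ i i', γ * (∑ j, prodMat A b s i' j) ≤ ∑ j, prodMat A b s i j := by
    intro b s hs i i'
    obtain ⟨t, rfl⟩ : ∃ t, s = t + 1 := ⟨s - 1, by omega⟩
    exact rows_comp hε hγ hγc hpos hrow b t i i'
  have hmid : ∀ {N : ℝ}, Real.exp (-C_P) ≤ N → N ≤ Real.exp C_P →
      γ * Real.exp (-(2*C_P)) ≤ N ∧ N ≤ Real.exp (2*C_P) / γ := by
    intro N h1 h2
    constructor
    · calc γ * Real.exp (-(2*C_P)) ≤ 1 * Real.exp (-(2*C_P)) :=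
            mul_le_mul_of_nonneg_right hγ1 (Real.exp_pos _).le
        _ = Real.exp (-(2*C_P)) := one_mul _
        _ ≤ Real.exp (-C_P) := Real.exp_le_exp.2 (by linarith)
        _ ≤ N := h1
    · rw [le_div_iff₀ hγ]
      calc N * γ ≤ N * 1 := by
            have hN : 0 ≤ N := le_trans (Real.exp_pos _).le h1
            exact mul_le_mul_of_nonneg_left hγ1 hN
        _ = N := mul_one _
        _ ≤ Real.exp C_P := h2
        _ ≤ Real.exp (2*C_P) := Real.exp_le_exp.2 (by linarith)
  rcases lt_trichotomy a 0 with ha | ha | ha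
  · -- a ≤ -1
    rcases lt_trichotomy (a + (ℓ:ℤ)) 0 with hn | hn | hn
    · -- case (v) : a + ℓ ≤ -1
      have hq1 : 1 ≤ (-(a + (ℓ:ℤ))).toNat := by omega
      have hsp := prodMat_split (A := A) a ℓ ((-(a + (ℓ:ℤ))).toNat)
      have hfix : ℓ + (-(a + (ℓ:ℤ))).toNat = (-a).toNat := by omega
      rw [hfix] at hsp
      have hB := matNorm_eq_exp_neg (A := A) hm hε hpos (n := a + ℓ) (by omega)
      have hP := matNorm_eq_exp_neg (A := A) hm hε hpos (n := a) (by omega)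
      rw [hsp] at hP
      have hub : Real.exp (-potential A a) ≤
          matNorm (prodMat A a ℓ) * Real.exp (-potential A (a + ℓ)) := by
        rw [← hP, ← hB]
        calc matNorm (prodMat A (a + ℓ) ((-(a + (ℓ:ℤ))).toNat) * prodMat A a ℓ)
            ≤ matNorm (prodMat A (a + ℓ) ((-(a + (ℓ:ℤ))).toNat)) * matNorm (prodMat A a ℓ) :=
              matNorm_mul_le _ _ (hnn _ _) (hnn _ _)
          _ = matNorm (prodMat A a ℓ) * matNorm (prodMat A (a + ℓ) ((-(a + (ℓ:ℤ))).toNat)) :=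
              mul_comm _ _
      have hlb : γ * (matNorm (prodMat A a ℓ) * Real.exp (-potential A (a + ℓ))) ≤
          Real.exp (-potential A a) := by
        rw [← hP, ← hB]
        have := matNorm_mul_ge hm hγ (prodMat A (a + ℓ) ((-(a + (ℓ:ℤ))).toNat))
          (prodMat A a ℓ) (hnn _ _) (hnn _ _) (hcomp' a ℓ hℓ)
        calc γ * (matNorm (prodMat A a ℓ) * matNorm (prodMat A (a + ℓ) ((-(a + (ℓ:ℤ))).toNat)))
            = γ * (matNorm (prodMat A (a + ℓ) ((-(a + (ℓ:ℤ))).toNat)) * matNorm (prodMat A a ℓ)) := by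
              ring
          _ ≤ _ := this
      have h1 := abs_le.1 (hpot a)
      have h2 := abs_le.1 (hpot (a + ℓ))
      exact sandwich_main hγ hγ1 (by linarith) (by linarith) hub hlb
    · -- case (iv) : a + ℓ = 0
      have hfix : ℓ = (-a).toNat := by omega
      have hP := matNorm_eq_exp_neg (A := A) hm hε hpos (n := a) (by omega)
      rw [← hfix] at hP
      rw [hP]
      have h1 := abs_le.1 (hpot a)
      exact hmid (Real.exp_le_exp.2 (by linarith)) (Real.exp_le_exp.2 (by linarith))
    · -- case (iii) : a ≤ -1 < a + ℓ
      have hp1 : 1 ≤ (-a).toNat := by omega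
      have hsp := prodMat_split (A := A) a ((-a).toNat) ((a + (ℓ:ℤ)).toNat)
      have hfix : (-a).toNat + (a + (ℓ:ℤ)).toNat = ℓ := by omega
      have hzero : a + ((-a).toNat : ℤ) = 0 := by omega
      rw [hfix, hzero] at hsp
      have hB := matNorm_eq_exp_pos (A := A) hm hε hpos (n := a + ℓ) (by omega)
      have hC := matNorm_eq_exp_neg (A := A) hm hε hpos (n := a) (by omega)
      have hub : matNorm (prodMat A a ℓ) ≤
          Real.exp (potential A (a + ℓ)) * Real.exp (-potential A a) := by
        rw [← hB, ← hC, hsp]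
        exact matNorm_mul_le _ _ (hnn _ _) (hnn _ _)
      have hlb : γ * (Real.exp (potential A (a + ℓ)) * Real.exp (-potential A a)) ≤
          matNorm (prodMat A a ℓ) := by
        rw [← hB, ← hC, hsp]
        exact matNorm_mul_ge hm hγ _ _ (hnn _ _) (hnn _ _) (hcomp' a ((-a).toNat) hp1)
      have h1 := abs_le.1 (hpot a)
      have h2 := abs_le.1 (hpot (a + ℓ))
      constructor
      · calc γ * Real.exp (-(2*C_P))
            ≤ γ * (Real.exp (potential A (a + ℓ)) * Real.exp (-potential A a)) := by
              rw [← Real.exp_add]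
              exact mul_le_mul_of_nonneg_left (Real.exp_le_exp.2 (by linarith)) hγ.le
          _ ≤ matNorm (prodMat A a ℓ) := hlb
      · calc matNorm (prodMat A a ℓ)
            ≤ Real.exp (potential A (a + ℓ)) * Real.exp (-potential A a) := hub
          _ = Real.exp (potential A (a + ℓ) + -potential A a) := (Real.exp_add _ _).symm
          _ ≤ Real.exp (2*C_P) := Real.exp_le_exp.2 (by linarith)
          _ ≤ Real.exp (2*C_P) / γ := by
              rw [le_div_iff₀ hγ]
              nlinarith [Real.exp_pos (2*C_P)]
  · -- case (ii) : a = 0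
    subst ha
    have htn : ((ℓ:ℤ)).toNat = ℓ := by omega
    have hP := matNorm_eq_exp_pos (A := A) hm hε hpos (n := (ℓ:ℤ)) (by omega)
    rw [htn] at hP
    rw [hP]
    have h1 := abs_le.1 (hpot (ℓ:ℤ))
    exact hmid (Real.exp_le_exp.2 (by linarith)) (Real.exp_le_exp.2 (by linarith))
  · -- case (i) : 1 ≤ a
    have hp1 : 1 ≤ a.toNat := by omega
    have hsp := prodMat_split (A := A) 0 (a.toNat) ℓ
    have hzero : (0:ℤ) + (a.toNat : ℤ) = a := by omega
    rw [hzero] at hsp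
    have hfix : (a + (ℓ:ℤ)).toNat = a.toNat + ℓ := by omega
    have hB := matNorm_eq_exp_pos (A := A) hm hε hpos (n := a + ℓ) (by omega)
    rw [hfix, hsp] at hB
    have hC := matNorm_eq_exp_pos (A := A) hm hε hpos (n := a) ha
    have hub : Real.exp (potential A (a + ℓ)) ≤
        matNorm (prodMat A a ℓ) * Real.exp (potential A a) := by
      rw [← hB, ← hC]
      exact matNorm_mul_le _ _ (hnn _ _) (hnn _ _)
    have hlb : γ * (matNorm (prodMat A a ℓ) * Real.exp (potential A a)) ≤
        Real.exp (potential A (a + ℓ)) := by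
      rw [← hB, ← hC]
      exact matNorm_mul_ge hm hγ _ _ (hnn _ _) (hnn _ _) (hcomp' 0 (a.toNat) hp1)
    have h1 := abs_le.1 (hpot a)
    have h2 := abs_le.1 (hpot (a + ℓ))
    exact sandwich_main hγ hγ1 (by linarith) (by linarith) hub hlb

lemma mulVec_coord_bounds (hε : 0 < εbar) (hγ : 0 < γ) (hγc : γ * c = εbar)
    (hpos : ∀ n i j, εbar ≤ A n i j) (hrow : ∀ n i, ∑ j, A n i j ≤ c)
    (a : ℤ) {ℓ : ℕ} (hℓ : 1 ≤ ℓ) (x : Fin m → ℝ) (hx : ∀ i, 0 ≤ x i) (i : Fin m) :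
    γ * (γ * matNorm (prodMat A a ℓ)) * ‖x‖ ≤ (prodMat A a ℓ).mulVec x i ∧
      (prodMat A a ℓ).mulVec x i ≤ matNorm (prodMat A a ℓ) * ‖x‖ := by
  obtain ⟨t, rfl⟩ : ∃ t, ℓ = t + 1 := ⟨ℓ - 1, by omega⟩
  have hP : ∀ i j, 0 ≤ prodMat A a (t+1) i j :=
    prodMat_nonneg (fun n i j => le_trans hε.le (hpos n i j)) a (t+1)
  have hxn : ∀ j, x j ≤ ‖x‖ := fun j => by
    have := norm_le_pi_norm x j
    rw [Real.norm_eq_abs] at this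
    exact le_trans (le_abs_self _) this
  have hx0 : (0:ℝ) ≤ ‖x‖ := norm_nonneg x
  have hnx : ‖x‖ ≤ ∑ j, x j := by
    refine (pi_norm_le_iff_of_nonneg (Finset.sum_nonneg fun j _ => hx j)).2 fun j => ?_
    rw [Real.norm_eq_abs, abs_of_nonneg (hx j)]
    exact Finset.single_le_sum (fun j _ => hx j) (Finset.mem_univ j)
  have hmv : (prodMat A a (t+1)).mulVec x i = ∑ j, prodMat A a (t+1) i j * x j := by
    simp [Matrix.mulVec, dotProduct]
  have hri0 : 0 ≤ ∑ j, prodMat A a (t+1) i j := Finset.sum_nonneg fun j _ => hP i j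
  have hri : γ * matNorm (prodMat A a (t+1)) ≤ ∑ j, prodMat A a (t+1) i j := by
    have h1 : matNorm (prodMat A a (t+1)) ≤ (∑ j, prodMat A a (t+1) i j) / γ := by
      refine matNorm_le_of _ hP (div_nonneg hri0 hγ.le) fun i' => ?_
      rw [le_div_iff₀ hγ]
      calc (∑ j, prodMat A a (t+1) i' j) * γ = γ * ∑ j, prodMat A a (t+1) i' j := mul_comm _ _
        _ ≤ ∑ j, prodMat A a (t+1) i j := rows_comp hε hγ hγc hpos hrow a t i i'
    calc γ * matNorm (prodMat A a (t+1)) ≤ γ * ((∑ j, prodMat A a (t+1) i j) / γ) :=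
          mul_le_mul_of_nonneg_left h1 hγ.le
      _ = ∑ j, prodMat A a (t+1) i j := by field_simp
  constructor
  · rw [hmv]
    calc γ * (γ * matNorm (prodMat A a (t+1))) * ‖x‖
        ≤ γ * (∑ j, prodMat A a (t+1) i j) * ‖x‖ := by
          refine mul_le_mul_of_nonneg_right ?_ hx0
          exact mul_le_mul_of_nonneg_left hri hγ.le
      _ ≤ γ * (∑ j, prodMat A a (t+1) i j) * ∑ j, x j := by
          refine mul_le_mul_of_nonneg_left hnx ?_
          exact mul_nonneg hγ.le hri0
      _ = ∑ j, (γ * ∑ j', prodMat A a (t+1) i j') * x j := by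
          rw [Finset.mul_sum]
      _ ≤ ∑ j, prodMat A a (t+1) i j * x j := by
          refine Finset.sum_le_sum fun j _ => ?_
          exact mul_le_mul_of_nonneg_right (entry_ge hε hγ hγc hpos hrow a t i j) (hx j)
  · rw [hmv]
    calc ∑ j, prodMat A a (t+1) i j * x j ≤ ∑ j, prodMat A a (t+1) i j * ‖x‖ :=
          Finset.sum_le_sum fun j _ => mul_le_mul_of_nonneg_left (hxn j) (hP i j)
      _ = (∑ j, prodMat A a (t+1) i j) * ‖x‖ := (Finset.sum_mul _ _ _).symm
      _ ≤ matNorm (prodMat A a (t+1)) * ‖x‖ :=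
          mul_le_mul_of_nonneg_right (rowSum_le_matNorm _ hP i) hx0

end aux

/-- a bounded potential implies two-sided coordinatewise bounds on products
of the matrices `A_n` applied to nonnegative vectors (equation (2.28)). Here `‖x‖` is the
sup norm `max_i |x_i|`. -/
theorem bounded_potential_product_bounds (m : ℕ) (hm : 1 ≤ m) (εbar C_P : ℝ)
    (hε : 0 < εbar) (hCP : 0 < C_P)
    (A : ℤ → Matrix (Fin m) (Fin m) ℝ)
    (hpos : ∀ (n : ℤ) (i j : Fin m), εbar ≤ A n i j)
    (hnorm : ∀ (n : ℤ) (i : Fin m), ∑ j, |A n i j| ≤ ((m : ℝ) * εbar)⁻¹)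
    (hpot : ∀ n : ℤ, |potential A n| ≤ C_P) :
    ∃ Ctil : ℝ, ∀ (n k : ℤ), k < n → ∀ x : Fin m → ℝ,
      (∀ i, 0 ≤ x i) → x ≠ 0 → ∀ i : Fin m,
        Real.exp (-Ctil) * ‖x‖ ≤ prodApply A k (n - k).toNat x i ∧
        prodApply A k (n - k).toNat x i ≤ Real.exp Ctil * ‖x‖ := by
  have hm' : (1:ℝ) ≤ (m:ℝ) := by exact_mod_cast hm
  set c : ℝ := ((m:ℝ) * εbar)⁻¹ with hc
  set γ : ℝ := (m:ℝ) * εbar ^ 2 with hγdef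
  have hmε : 0 < (m:ℝ) * εbar := by positivity
  have hγ : 0 < γ := by rw [hγdef]; positivity
  have hrow : ∀ (n : ℤ) (i : Fin m), ∑ j, A n i j ≤ c := by
    intro n i
    calc ∑ j, A n i j ≤ ∑ j, |A n i j| := Finset.sum_le_sum fun j _ => le_abs_self _
      _ ≤ c := hnorm n i
  have hme1 : (m:ℝ) * εbar ≤ 1 := by
    have h1 : (m:ℝ) * εbar ≤ c := by
      calc (m:ℝ) * εbar = ∑ _j : Fin m, εbar := by
            rw [Finset.sum_const, Finset.card_univ, Fintype.card_fin, nsmul_eq_mul]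
        _ ≤ ∑ j, A 0 ⟨0, hm⟩ j := Finset.sum_le_sum fun j _ => hpos 0 _ j
        _ ≤ c := hrow 0 ⟨0, hm⟩
    rw [hc] at h1
    have h3 : ((m:ℝ)*εbar) * ((m:ℝ)*εbar)⁻¹ = 1 := mul_inv_cancel₀ (ne_of_gt hmε)
    nlinarith [mul_le_mul_of_nonneg_left h1 hmε.le]
  have hγ1 : γ ≤ 1 := by
    rw [hγdef]
    nlinarith
  have hγc : γ * c = εbar := by
    rw [hγdef, hc]
    field_simp
  set L : ℝ := γ * Real.exp (-(2*C_P)) with hLdef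
  set U : ℝ := Real.exp (2*C_P) / γ with hUdef
  have hL : 0 < L := by rw [hLdef]; positivity
  have hU : 0 < U := by rw [hUdef]; positivity
  have hγγL : 0 < γ * γ * L := by positivity
  refine ⟨max (Real.log U) (-Real.log (γ * γ * L)), ?_⟩
  intro n k hkn x hx _hx0 i
  set Ctil := max (Real.log U) (-Real.log (γ * γ * L)) with hCtil
  have hUc : U ≤ Real.exp Ctil := by
    rw [← Real.exp_log hU]
    exact Real.exp_le_exp.2 (le_max_left _ _)
  have hLc : Real.exp (-Ctil) ≤ γ * γ * L := by
    rw [← Real.exp_log hγγL]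
    refine Real.exp_le_exp.2 ?_
    have := le_max_right (Real.log U) (-Real.log (γ * γ * L))
    linarith
  set ℓ : ℕ := (n - k).toNat with hℓdef
  have hℓ : 1 ≤ ℓ := by omega
  have hNb := matNorm_prodMat_bounds hm hε hγ hγ1 hγc hpos hrow hCP hpot k hℓ
  have hcb := mulVec_coord_bounds hε hγ hγc hpos hrow k hℓ x hx i
  have hx0 : (0:ℝ) ≤ ‖x‖ := norm_nonneg x
  have hPA : prodApply A k ℓ x = (prodMat A k ℓ).mulVec x := prodApply_eq k ℓ x
  constructor
  · calc Real.exp (-Ctil) * ‖x‖ ≤ (γ * γ * L) * ‖x‖ :=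
          mul_le_mul_of_nonneg_right hLc hx0
      _ ≤ γ * (γ * matNorm (prodMat A k ℓ)) * ‖x‖ := by
          refine mul_le_mul_of_nonneg_right ?_ hx0
          calc γ * γ * L = γ * (γ * L) := by ring
            _ ≤ γ * (γ * matNorm (prodMat A k ℓ)) := by
                refine mul_le_mul_of_nonneg_left ?_ hγ.le
                exact mul_le_mul_of_nonneg_left hNb.1 hγ.le
      _ ≤ prodApply A k ℓ x i := by rw [hPA]; exact hcb.1
  · calc prodApply A k ℓ x i ≤ matNorm (prodMat A k ℓ) * ‖x‖ := by rw [hPA]; exact hcb.2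
      _ ≤ U * ‖x‖ := mul_le_mul_of_nonneg_right hNb.2 hx0
      _ ≤ Real.exp Ctil * ‖x‖ := mul_le_mul_of_nonneg_right hUc hx0
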